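/- (Barbălat's lemma) Let f be a nonnegative function defined on [0, ∞) such that f is integrable on [0, ∞) and uniformly continuous on [0, ∞). Then lim_{t→∞} f(t) = 0. -/

import Mathlib

open Set Filter MeasureTheory

/-- **Barbălat's lemma, Lemma 2.4.** If `f` is nonnegative on `[0, ∞)`,
Lebesgue integrable on `[0, ∞)` and uniformly continuous on `[0, ∞)`, then
`f(t) → 0` as `t → ∞`. -/
theorem barbalat (f : ℝ → ℝ)
    (hnn : ∀ t, 0 ≤ t → 0 ≤ f t)
    (hint : IntegrableOn f (Set.Ici 0))
    (hUC : UniformContinuousOn f (Set.Ici 0)) :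
    Tendsto f atTop (nhds 0) := by
  by_contra h
  rw [Metric.tendsto_nhds] at h
  push_neg at h
  obtain ⟨ε, hε, hfreq⟩ := h
  rw [Metric.uniformContinuousOn_iff] at hUC
  obtain ⟨δ, hδ, hδ'⟩ := hUC (ε/2) (by linarith)
  have hIoi0 : IntegrableOn f (Ioi 0) := hint.mono_set Ioi_subset_Ici_self
  have hlim : Tendsto (fun b => ∫ x in (0:ℝ)..b, f x) atTop (nhds (∫ x in Ioi (0:ℝ), f x)) :=
    MeasureTheory.intervalIntegral_tendsto_integral_Ioi 0 hIoi0 tendsto_id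
  have htail : Tendsto (fun T => ∫ x in Ioi T, f x) atTop (nhds 0) := by
    have hcong : ∀ᶠ T in atTop, (∫ x in Ioi T, f x)
        = (∫ x in Ioi (0:ℝ), f x) - ∫ x in (0:ℝ)..T, f x := by
      filter_upwards [eventually_ge_atTop (0:ℝ)] with T hT
      rw [intervalIntegral.integral_of_le hT]
      have hsplit : Ioi (0:ℝ) = Ioc 0 T ∪ Ioi T := (Ioc_union_Ioi_eq_Ioi hT).symm
      rw [show (∫ x in Ioi (0:ℝ), f x) = ∫ x in Ioc 0 T ∪ Ioi T, f x by rw [← hsplit]]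
      rw [MeasureTheory.setIntegral_union (Ioc_disjoint_Ioi le_rfl) measurableSet_Ioi
        (hIoi0.mono_set (by rw [hsplit]; exact subset_union_left))
        (hIoi0.mono_set (by rw [hsplit]; exact subset_union_right))]
      ring
    rw [tendsto_congr' hcong]
    simpa using hlim.const_sub (∫ x in Ioi (0:ℝ), f x)
  have c_pos : 0 < ε/2 * (δ/2) := by positivity
  have hev : ∀ᶠ T in atTop, (∫ x in Ioi T, f x) < ε/2 * (δ/2) :=
    htail.eventually (eventually_lt_nhds c_pos)
  obtain ⟨t, htf, ht0, htail_t⟩ :=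
    (hfreq.and_eventually ((eventually_ge_atTop (0:ℝ)).and hev)).exists
  -- htf : ε ≤ dist (f t) 0
  have hft : ε ≤ f t := by
    have : dist (f t) 0 = |f t| := by simp [Real.dist_eq]
    rw [this, abs_of_nonneg (hnn t ht0)] at htf
    exact htf
  have hIoisub : Ioi t ⊆ Ici (0:ℝ) := fun x hx => le_trans ht0 hx.le
  have hintIoi : IntegrableOn f (Ioi t) := hint.mono_set hIoisub
  have hlow : ε/2 * (δ/2) ≤ ∫ x in Ioc t (t + δ/2), f x := by
    have hmeas : MeasurableSet (Ioc t (t + δ/2)) := measurableSet_Ioc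
    have hvol : volume (Ioc t (t + δ/2)) ≠ ⊤ := by
      simp [Real.volume_Ioc]
    have hbound : ∀ x ∈ Ioc t (t + δ/2), ε/2 ≤ f x := by
      intro x hx
      have hx0 : (0:ℝ) ≤ x := le_trans ht0 hx.1.le
      have hd : dist x t < δ := by
        rw [Real.dist_eq, abs_of_nonneg (by linarith [hx.1.le] : (0:ℝ) ≤ x - t)]
        have := hx.2
        linarith
      have := hδ' x hx0 t ht0 hd
      rw [Real.dist_eq] at this
      have := abs_lt.1 this
      linarith [this.1, this.2]
    have := MeasureTheory.setIntegral_ge_of_const_le hmeas hvol hbound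
      (hintIoi.mono_set Ioc_subset_Ioi_self)
    calc ε/2 * (δ/2) = ε/2 * (volume (Ioc t (t + δ/2))).toReal := by
          rw [Real.volume_Ioc]
          congr 1
          rw [show t + δ/2 - t = δ/2 by ring, ENNReal.toReal_ofReal (by linarith)]
      _ ≤ ∫ x in Ioc t (t + δ/2), f x := by rw [smul_eq_mul, mul_comm] at this; exact this
  have hup : (∫ x in Ioc t (t + δ/2), f x) ≤ ∫ x in Ioi t, f x := by
    apply MeasureTheory.setIntegral_mono_set hintIoi
    · filter_upwards [MeasureTheory.ae_restrict_mem measurableSet_Ioi] with x hx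
      exact hnn x (hIoisub hx)
    · exact HasSubset.Subset.eventuallyLE Ioc_subset_Ioi_self
  linarith
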